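/- Suppose λ ∈ ℂ and φ ∈ H^5(0, L) ∩ H²₀(0, L) is a nontrivial solution of λφ + φ' − aφ''' + bφ''''' = 0 on (0, L) with φ(0) = φ(L) = φ'(0) = φ'(L) = φ''(0) = φ''(L) = 0, where a, b > 0. Then λ is purely imaginary. (This follows by multiplying the equation by the conjugate of φ, integrating over [0, L], and integrating by parts using the boundary conditions.) -/

import Mathlib

open Complex

/-- If `φ` is a nontrivial smooth solution on `[0,L]` of
`λφ + φ' - aφ''' + bφ''''' = 0` with `φ = φ' = φ'' = 0` at both endpoints,
then `λ` is purely imaginary. -/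
theorem stmt9 (a b L : ℝ) (ha : 0 < a) (hb : 0 < b) (hL : 0 < L)
    (lam : ℂ) (φ : ℝ → ℂ) (hφ : ContDiff ℝ 5 φ)
    (heq : ∀ x ∈ Set.Icc (0 : ℝ) L,
      lam * φ x + deriv φ x - (a : ℂ) * iteratedDeriv 3 φ x
        + (b : ℂ) * iteratedDeriv 5 φ x = 0)
    (hb0 : φ 0 = 0) (hbL : φ L = 0)
    (hb0' : deriv φ 0 = 0) (hbL' : deriv φ L = 0)
    (hb0'' : iteratedDeriv 2 φ 0 = 0) (hbL'' : iteratedDeriv 2 φ L = 0)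
    (hnt : ∃ x ∈ Set.Icc (0 : ℝ) L, φ x ≠ 0) :
    lam.re = 0 := by
  -- derivative of iterated derivatives
  have hd : ∀ n : ℕ, n ≤ 4 → ∀ x : ℝ,
      HasDerivAt (iteratedDeriv n φ) (iteratedDeriv (n + 1) φ x) x := by
    intro n hn x
    have h1 : ContDiff ℝ 1 (iteratedDeriv n φ) := by
      rw [iteratedDeriv_eq_iterate]
      have hle : (1 + n : ℕ) ≤ 5 := by omega
      exact ContDiff.iterate_deriv' 1 n (hφ.of_le (by exact_mod_cast hle))
    rw [iteratedDeriv_succ]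
    exact ((h1.differentiable one_ne_zero) x).hasDerivAt
  set r : ℕ → ℕ → ℝ → ℝ := fun n m x =>
    ((starRingEnd ℂ) (iteratedDeriv n φ x) * iteratedDeriv m φ x).re with hrdef
  have hr : ∀ n m : ℕ, n ≤ 4 → m ≤ 4 → ∀ x : ℝ,
      HasDerivAt (r n m) (r (n + 1) m x + r n (m + 1) x) x := by
    intro n m hn hm x
    have h2 := ((hd n hn x).star.mul (hd m hm x))
    have h3 := Complex.reCLM.hasFDerivAt.comp_hasDerivAt x h2
    exact h3
  have hsymm : ∀ n m : ℕ, ∀ x : ℝ, r n m x = r m n x := by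
    intro n m x
    simp only [hrdef, Complex.mul_re, Complex.conj_re, Complex.conj_im]
    ring
  -- the antiderivative
  set G : ℝ → ℝ := fun x => -(1/2) * r 0 0 x
      + a * (r 0 2 x - (1/2) * r 1 1 x)
      - b * (r 0 4 x - r 1 3 x + (1/2) * r 2 2 x) with hGdef
  have hG : ∀ x : ℝ, HasDerivAt G
      (-(1/2) * (r 1 0 x + r 0 1 x)
        + a * ((r 1 2 x + r 0 3 x) - (1/2) * (r 2 1 x + r 1 2 x))
        - b * ((r 1 4 x + r 0 5 x) - (r 2 3 x + r 1 4 x)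
            + (1/2) * (r 3 2 x + r 2 3 x))) x := by
    intro x
    have t1 := (hr 0 0 (by norm_num) (by norm_num) x).const_mul (-(1/2) : ℝ)
    have t2 := ((hr 0 2 (by norm_num) (by norm_num) x).sub
      ((hr 1 1 (by norm_num) (by norm_num) x).const_mul ((1:ℝ)/2))).const_mul a
    have t3 := (((hr 0 4 (by norm_num) (by norm_num) x).sub
      (hr 1 3 (by norm_num) (by norm_num) x)).add
      ((hr 2 2 (by norm_num) (by norm_num) x).const_mul ((1:ℝ)/2))).const_mul b
    exact (t1.add t2).sub t3
  -- on [0,L] the derivative of G equals lam.re * |φ|²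
  have hval : ∀ x ∈ Set.Icc (0:ℝ) L,
      HasDerivAt G (lam.re * Complex.normSq (φ x)) x := by
    intro x hx
    have h := hG x
    have e1 : -(1/2) * (r 1 0 x + r 0 1 x)
        + a * ((r 1 2 x + r 0 3 x) - (1/2) * (r 2 1 x + r 1 2 x))
        - b * ((r 1 4 x + r 0 5 x) - (r 2 3 x + r 1 4 x)
            + (1/2) * (r 3 2 x + r 2 3 x))
        = -(r 0 1 x) + a * r 0 3 x - b * r 0 5 x := by
      rw [hsymm 1 0, hsymm 2 1, hsymm 3 2]
      ring
    have heq' : deriv φ x - (a : ℂ) * iteratedDeriv 3 φ x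
        + (b : ℂ) * iteratedDeriv 5 φ x = -(lam * φ x) := by
      have := heq x hx; linear_combination this
    have e2 : -(r 0 1 x) + a * r 0 3 x - b * r 0 5 x
        = lam.re * Complex.normSq (φ x) := by
      have : -(r 0 1 x) + a * r 0 3 x - b * r 0 5 x
          = (-(starRingEnd ℂ (φ x) * (deriv φ x - (a : ℂ) * iteratedDeriv 3 φ x
              + (b : ℂ) * iteratedDeriv 5 φ x))).re := by
        simp only [hrdef, iteratedDeriv_zero, iteratedDeriv_one]
        simp [Complex.mul_re, Complex.add_re, Complex.sub_re, Complex.ofReal_re,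
          Complex.ofReal_im]
        ring
      rw [this, heq']
      have : -(starRingEnd ℂ (φ x) * -(lam * φ x)) = lam * (Complex.normSq (φ x) : ℂ) := by
        rw [Complex.normSq_eq_conj_mul_self]; ring
      rw [this]
      simp [Complex.mul_re]
    rw [e1, e2] at h
    exact h
  have hint : IntervalIntegrable (fun x => lam.re * Complex.normSq (φ x))
      MeasureTheory.volume 0 L :=
    (continuous_const.mul (Complex.continuous_normSq.comp hφ.continuous)).intervalIntegrable 0 L
  have key : ∫ x in (0:ℝ)..L, lam.re * Complex.normSq (φ x) = G L - G 0 := by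
    apply intervalIntegral.integral_eq_sub_of_hasDerivAt _ hint
    intro x hx
    exact hval x (by rwa [Set.uIcc_of_le hL.le] at hx)
  have hG0 : G 0 = 0 := by
    simp [hGdef, hrdef, iteratedDeriv_zero, iteratedDeriv_one, hb0, hb0', hb0'']
  have hGL : G L = 0 := by
    simp [hGdef, hrdef, iteratedDeriv_zero, iteratedDeriv_one, hbL, hbL', hbL'']
  rw [hG0, hGL, sub_zero, intervalIntegral.integral_const_mul] at key
  have hpos : 0 < ∫ x in (0:ℝ)..L, Complex.normSq (φ x) := by
    obtain ⟨x₀, hx₀, hx₀ne⟩ := hnt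
    apply intervalIntegral.integral_pos hL
    · exact (Complex.continuous_normSq.comp hφ.continuous).continuousOn
    · intro x _; exact Complex.normSq_nonneg _
    · exact ⟨x₀, hx₀, Complex.normSq_pos.mpr hx₀ne⟩
  rcases mul_eq_zero.mp key with h | h
  · exact h
  · exact absurd h hpos.ne'
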